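/- A shift X ∈ S^d is of finite type if and only if there exists ε > 0 such that every shift Z ∈ S^d with δ_H(Z,X) < ε satisfies Z ⊆ X. -/

import Mathlib

/-- The group `ℤ^d`. -/
abbrev ZD (d : ℕ) := Fin d → ℤ

/-- A configuration is a map `ℤ^d → ℤ`. -/
abbrev Config (d : ℕ) := ZD d → ℤ

/-- The shift map `σ^u`, defined by `σ^u(x)_v = x_{u+v}`. -/
def shiftMap {d : ℕ} (u : ZD d) (x : Config d) : Config d := fun v => x (u + v)

/-- The sup norm `‖·‖_∞` on `ℤ^d`, valued in `ℕ`. -/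
def normInf {d : ℕ} (n : ZD d) : ℕ := Finset.univ.sup fun i => (n i).natAbs

open Classical in
/-- The metric `δ` on configurations: `δ(x,y) = 2^{-min{‖n‖_∞ : x_n ≠ y_n}}`, `δ(x,x) = 0`. -/
noncomputable def deltaDist {d : ℕ} (x y : Config d) : ℝ :=
  if x = y then 0
  else (2 : ℝ) ^ (-((sInf {m : ℕ | ∃ n : ZD d, normInf n = m ∧ x n ≠ y n} : ℕ) : ℤ))

/-- The closure of a set of configurations with respect to the metric `δ`. -/
def deltaClosure {d : ℕ} (A : Set (Config d)) : Set (Config d) :=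
  {x | ∀ ε : ℝ, 0 < ε → ∃ a ∈ A, deltaDist x a < ε}

/-- A set of configurations is closed for `δ` when it contains all its limit points. -/
def IsDeltaClosed {d : ℕ} (A : Set (Config d)) : Prop := deltaClosure A ⊆ A

/-- A `d`-dimensional shift: a nonempty set of configurations over a common finite
alphabet, closed for `δ` and invariant under every shift map. -/
def IsShift {d : ℕ} (X : Set (Config d)) : Prop :=
  X.Nonempty ∧ (∃ A : Finset ℤ, ∀ x ∈ X, ∀ v : ZD d, x v ∈ A) ∧ IsDeltaClosed X ∧
    ∀ u : ZD d, ∀ x ∈ X, shiftMap u x ∈ X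

/-- The Hausdorff metric `δ_H` on the space of shifts. -/
noncomputable def deltaH {d : ℕ} (X Z : Set (Config d)) : ℝ :=
  max (⨆ x : X, ⨅ z : Z, deltaDist (x : Config d) (z : Config d))
      (⨆ z : Z, ⨅ x : X, deltaDist (x : Config d) (z : Config d))

/-- A subsystem of a shift `X`: a nonempty closed shift-invariant subset of `X`. -/
def IsSubsystem {d : ℕ} (Z X : Set (Config d)) : Prop :=
  Z.Nonempty ∧ Z ⊆ X ∧ IsDeltaClosed Z ∧ ∀ u : ZD d, ∀ z ∈ Z, shiftMap u z ∈ Z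

/-- A maximal subsystem of `X`: a proper subsystem such that any subsystem strictly
between it and `X` equals `X`. -/
def IsMaximalSubsystem {d : ℕ} (Z X : Set (Config d)) : Prop :=
  IsSubsystem Z X ∧ Z ≠ X ∧ ∀ Z', IsSubsystem Z' X → Z ⊂ Z' → Z' = X

/-- An outcast of `X`: a proper subsystem contained in no maximal subsystem of `X`. -/
def IsOutcast {d : ℕ} (Z X : Set (Config d)) : Prop :=
  IsSubsystem Z X ∧ Z ≠ X ∧ ∀ M, IsMaximalSubsystem M X → ¬ Z ⊆ M

/-- A pattern with finite support `U` (given by the values of `p` on `U`) appears in the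
configuration `x`. -/
def PatternAppears {d : ℕ} (U : Finset (ZD d)) (p : ZD d → ℤ) (x : Config d) : Prop :=
  ∃ u : ZD d, ∀ v ∈ U, x (u + v) = p v

/-- The set of configurations over the alphabet `A` avoiding every pattern in `F`. -/
def XofF {d : ℕ} (A : Finset ℤ) (F : Set (Finset (ZD d) × (ZD d → ℤ))) : Set (Config d) :=
  {x | (∀ v : ZD d, x v ∈ A) ∧ ∀ q ∈ F, ¬ PatternAppears q.1 q.2 x}

/-- A shift of finite type: defined by a finite alphabet and a finite set of forbidden
patterns. -/
def IsSFT {d : ℕ} (X : Set (Config d)) : Prop :=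
  ∃ (A : Finset ℤ) (F : Finset (Finset (ZD d) × (ZD d → ℤ))), X = XofF A (F : Set _)

/-- `X` is an isolated point of the subspace `S` (with the Hausdorff metric `δ_H`). -/
def IsolatedIn {d : ℕ} (S : Set (Set (Config d))) (X : Set (Config d)) : Prop :=
  X ∈ S ∧ ∃ ε : ℝ, 0 < ε ∧ ∀ Z ∈ S, deltaH X Z < ε → Z = X

/-- The orbit of a configuration under the shift action. -/
def orbit {d : ℕ} (x : Config d) : Set (Config d) := {y | ∃ u : ZD d, y = shiftMap u x}

/-- A shift is transitive when some point has dense orbit. -/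
def IsTransitive {d : ℕ} (X : Set (Config d)) : Prop :=
  IsShift X ∧ ∃ x ∈ X, X ⊆ deltaClosure (orbit x)

/-- A shift is minimal when its only subsystem is itself. -/
def IsMinimalShift {d : ℕ} (X : Set (Config d)) : Prop :=
  IsShift X ∧ ∀ Z, IsSubsystem Z X → Z = X

lemma deltaDist_self {d : ℕ} (x : Config d) : deltaDist x x = 0 := by simp [deltaDist]

lemma deltaDist_nonneg {d : ℕ} (x y : Config d) : 0 ≤ deltaDist x y := by
  unfold deltaDist; split
  · exact le_refl 0
  · positivity

lemma deltaDist_le_one {d : ℕ} (x y : Config d) : deltaDist x y ≤ 1 := by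
  unfold deltaDist; split
  · exact zero_le_one
  · calc (2:ℝ) ^ (-((sInf {m : ℕ | ∃ n : ZD d, normInf n = m ∧ x n ≠ y n} : ℕ) : ℤ))
        ≤ (2:ℝ) ^ (0:ℤ) := by
          apply zpow_le_zpow_right₀ one_le_two
          simp
      _ = 1 := by norm_num

lemma agree_of_deltaDist_lt {d : ℕ} {x y : Config d} {k : ℕ}
    (h : deltaDist x y < (2:ℝ) ^ (-(k:ℤ))) :
    ∀ n : ZD d, normInf n ≤ k → x n = y n := by
  intro n hn
  by_cases hxy : x = y
  · rw [hxy]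
  · unfold deltaDist at h
    rw [if_neg hxy] at h
    have hk : (-((sInf {m : ℕ | ∃ n : ZD d, normInf n = m ∧ x n ≠ y n} : ℕ) : ℤ)) < (-(k:ℤ)) :=
      (zpow_lt_zpow_iff_right₀ (by norm_num : (1:ℝ) < 2)).mp h
    have hk' : k < sInf {m : ℕ | ∃ n : ZD d, normInf n = m ∧ x n ≠ y n} := by omega
    by_contra hne
    have : normInf n ∈ {m : ℕ | ∃ n : ZD d, normInf n = m ∧ x n ≠ y n} := ⟨n, rfl, hne⟩
    have := Nat.sInf_le this
    omega

lemma deltaDist_le_of_agree {d : ℕ} {x y : Config d} {k : ℕ}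
    (h : ∀ n : ZD d, normInf n ≤ k → x n = y n) :
    deltaDist x y ≤ (2:ℝ) ^ (-(k:ℤ) - 1) := by
  unfold deltaDist; split
  · positivity
  · rename_i hxy
    apply zpow_le_zpow_right₀ one_le_two
    have hne : ∃ n : ZD d, x n ≠ y n := Function.ne_iff.mp hxy
    obtain ⟨n0, hn0⟩ := hne
    have hSne : {m : ℕ | ∃ n : ZD d, normInf n = m ∧ x n ≠ y n}.Nonempty :=
      ⟨normInf n0, n0, rfl, hn0⟩
    have : k + 1 ≤ sInf {m : ℕ | ∃ n : ZD d, normInf n = m ∧ x n ≠ y n} := by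
      apply le_csInf hSne
      rintro m ⟨n, rfl, hne⟩
      by_contra hlt
      exact hne (h n (by omega))
    have := Int.ofNat_le.mpr this
    push_cast at this ⊢
    linarith

-- inf over X is bounded below by 0
lemma bddBelow_dist {d : ℕ} (X : Set (Config d)) (w : Config d) :
    BddBelow (Set.range fun x : X => deltaDist w (x : Config d)) :=
  ⟨0, by rintro r ⟨x, rfl⟩; exact deltaDist_nonneg _ _⟩

lemma bddBelow_dist' {d : ℕ} (X : Set (Config d)) (w : Config d) :
    BddBelow (Set.range fun x : X => deltaDist (x : Config d) w) :=
  ⟨0, by rintro r ⟨x, rfl⟩; exact deltaDist_nonneg _ _⟩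

/-- From `deltaH Z X < ε` and `w ∈ Z`, get a point of `X` within `ε` of `w`. -/
lemma exists_close_of_deltaH_lt {d : ℕ} {Z X : Set (Config d)} {ε : ℝ}
    (hXne : X.Nonempty) (h : deltaH Z X < ε) {w : Config d} (hw : w ∈ Z) :
    ∃ x ∈ X, deltaDist w x < ε := by
  have : Nonempty X := hXne.to_subtype
  have h1 : (⨆ z : Z, ⨅ x : X, deltaDist (z : Config d) (x : Config d)) < ε :=
    lt_of_le_of_lt (le_max_left _ _) h
  have hbdd : BddAbove (Set.range fun z : Z =>
      ⨅ x : X, deltaDist (z : Config d) (x : Config d)) := by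
    refine ⟨1, ?_⟩
    rintro r ⟨z, rfl⟩
    obtain ⟨x0, hx0⟩ := hXne
    exact le_trans (ciInf_le (bddBelow_dist X _) ⟨x0, hx0⟩) (deltaDist_le_one _ _)
  have h2 : (⨅ x : X, deltaDist w (x : Config d)) < ε :=
    lt_of_le_of_lt (le_ciSup hbdd (⟨w, hw⟩ : Z)) h1
  obtain ⟨x, hx⟩ := exists_lt_of_ciInf_lt h2
  exact ⟨x, x.2, hx⟩

lemma XofF_isDeltaClosed {d : ℕ} (A : Finset ℤ) (F : Set (Finset (ZD d) × (ZD d → ℤ))) :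
    IsDeltaClosed (XofF A F) := by
  intro x hx
  constructor
  · intro v
    obtain ⟨a, ha, hd⟩ := hx ((2:ℝ) ^ (-(normInf v : ℤ))) (by positivity)
    rw [agree_of_deltaDist_lt hd v le_rfl]
    exact ha.1 v
  · rintro q hq ⟨u, hu⟩
    set k := q.1.sup (fun v => normInf (u + v)) with hk
    obtain ⟨a, ha, hd⟩ := hx ((2:ℝ) ^ (-(k : ℤ))) (by positivity)
    refine ha.2 q hq ⟨u, fun v hv => ?_⟩
    rw [← agree_of_deltaDist_lt hd (u + v) (Finset.le_sup (f := fun v => normInf (u + v)) hv)]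
    exact hu v hv

lemma XofF_shiftInvariant {d : ℕ} (A : Finset ℤ) (F : Set (Finset (ZD d) × (ZD d → ℤ)))
    (u : ZD d) {x : Config d} (hx : x ∈ XofF A F) : shiftMap u x ∈ XofF A F := by
  constructor
  · intro v; exact hx.1 (u + v)
  · rintro q hq ⟨w, hw⟩
    refine hx.2 q hq ⟨u + w, fun v hv => ?_⟩
    rw [add_assoc]; exact hw v hv

noncomputable def ballZ (d r : ℕ) : Finset (ZD d) := Fintype.piFinset fun _ => Finset.Icc (-(r:ℤ)) r

lemma mem_ballZ {d r : ℕ} {n : ZD d} : n ∈ ballZ d r ↔ normInf n ≤ r := by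
  simp only [ballZ, Fintype.mem_piFinset, Finset.mem_Icc, normInf, Finset.sup_le_iff,
    Finset.mem_univ, true_implies]
  constructor <;> intro h i <;> have := h i <;> omega

lemma normInf_zero {d : ℕ} : normInf (0 : ZD d) = 0 := by simp [normInf]


/-- A shift `X` is of finite type iff there exists `ε > 0` such that every
shift `Z` with `δ_H(Z,X) < ε` satisfies `Z ⊆ X`. -/
theorem SFT_iff_neighborhood_of_subsystems
    (d : ℕ) (hd : 1 ≤ d) (X : Set (Config d)) (hX : IsShift X) :
    IsSFT X ↔ ∃ ε : ℝ, 0 < ε ∧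
      ∀ Z : Set (Config d), IsShift Z → deltaH Z X < ε → Z ⊆ X := by
  constructor
  · rintro ⟨A, F, rfl⟩
    set r : ℕ := F.sup (fun q => q.1.sup normInf) with hrdef
    refine ⟨(2:ℝ) ^ (-(r:ℤ)), by positivity, ?_⟩
    intro Z hZ hH w hw
    constructor
    · intro v
      have hwv : shiftMap v w ∈ Z := hZ.2.2.2 v w hw
      obtain ⟨x, hxX, hdist⟩ := exists_close_of_deltaH_lt hX.1 hH hwv
      have hag := agree_of_deltaDist_lt hdist 0 (by rw [normInf_zero]; exact Nat.zero_le r)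
      have h0 : shiftMap v w 0 = w v := by simp [shiftMap]
      rw [← h0, hag]
      exact hxX.1 0
    · rintro q hq ⟨u, hu⟩
      have hwu : shiftMap u w ∈ Z := hZ.2.2.2 u w hw
      obtain ⟨x, hxX, hdist⟩ := exists_close_of_deltaH_lt hX.1 hH hwu
      refine hxX.2 q hq ⟨0, fun v hv => ?_⟩
      have hvr : normInf v ≤ r :=
        le_trans (Finset.le_sup (f := normInf) hv)
          (Finset.le_sup (f := fun q => q.1.sup normInf) hq)
      have hag := agree_of_deltaDist_lt hdist v hvr
      rw [zero_add, ← hag]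
      simpa [shiftMap] using hu v hv
  · rintro ⟨ε, hε, hsub⟩
    classical
    obtain ⟨A, hA⟩ := hX.2.1
    obtain ⟨r, hr⟩ : ∃ r : ℕ, (2:ℝ) ^ (-(r:ℤ)) < ε := by
      obtain ⟨n, hn⟩ := exists_pow_lt_of_lt_one hε (by norm_num : (1/2:ℝ) < 1)
      refine ⟨n, ?_⟩
      rw [zpow_neg, zpow_natCast]
      rwa [one_div, inv_pow] at hn
    set B : Finset (ZD d) := ballZ d r with hBdef
    set P : Finset (Config d) :=
      (B.pi fun _ => A).image (fun f => fun v : ZD d => if h : v ∈ B then f v h else 0)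
      with hPdef
    set F : Finset (Finset (ZD d) × (ZD d → ℤ)) :=
      (P.filter (fun p => ∀ x ∈ X, ¬ PatternAppears B p x)).image (fun p => (B, p))
      with hFdef
    have hXsub : X ⊆ XofF A ((F : Finset (Finset (ZD d) × (ZD d → ℤ))) : Set (Finset (ZD d) × (ZD d → ℤ))) := by
      intro x hx
      refine ⟨hA x hx, ?_⟩
      rintro q hq hap
      simp only [hFdef, Finset.coe_image, Set.mem_image, Finset.mem_coe,
        Finset.mem_filter] at hq
      obtain ⟨p, ⟨hpP, hpall⟩, rfl⟩ := hq
      exact hpall x hx hap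
    have hYshift : IsShift (XofF A ((F : Finset (Finset (ZD d) × (ZD d → ℤ))) : Set (Finset (ZD d) × (ZD d → ℤ)))) := by
      refine ⟨hX.1.mono hXsub, ⟨A, fun x hx v => hx.1 v⟩, XofF_isDeltaClosed _ _,
        fun u x hx => XofF_shiftInvariant _ _ u hx⟩
    have hclose : ∀ y ∈ XofF A ((F : Finset (Finset (ZD d) × (ZD d → ℤ))) : Set (Finset (ZD d) × (ZD d → ℤ))), ∃ x ∈ X,
        deltaDist y x ≤ (2:ℝ) ^ (-(r:ℤ) - 1) := by
      intro y hy
      set p : Config d := fun v => if v ∈ B then y v else 0 with hpdef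
      have hpP : p ∈ P := by
        refine Finset.mem_image.mpr ⟨fun v _ => y v, Finset.mem_pi.mpr (fun v hv => hy.1 v), ?_⟩
        funext v
        by_cases h : v ∈ B <;> simp [hpdef, h]
      have hap : PatternAppears B p y := ⟨0, fun v hv => by simp [hpdef, hv]⟩
      have hnotF : ¬ (∀ x ∈ X, ¬ PatternAppears B p x) := by
        intro hall
        refine hy.2 (B, p) ?_ hap
        simp only [hFdef, Finset.coe_image, Set.mem_image, Finset.mem_coe, Finset.mem_filter]
        exact ⟨p, ⟨hpP, hall⟩, rfl⟩
      push_neg at hnotF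
      obtain ⟨x, hxX, u, hu⟩ := hnotF
      refine ⟨shiftMap u x, hX.2.2.2 u x hxX, deltaDist_le_of_agree ?_⟩
      intro n hn
      have hnB : n ∈ B := mem_ballZ.mpr hn
      have := hu n hnB
      simp only [shiftMap, this, hpdef, if_pos hnB]
    have hH : deltaH (XofF A ((F : Finset (Finset (ZD d) × (ZD d → ℤ))) : Set (Finset (ZD d) × (ZD d → ℤ)))) X < ε := by
      have : Nonempty X := hX.1.to_subtype
      have hb1 : (⨆ y : XofF A ((F : Finset (Finset (ZD d) × (ZD d → ℤ))) : Set (Finset (ZD d) × (ZD d → ℤ))), ⨅ x : X, deltaDist (y : Config d) (x : Config d))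
          ≤ (2:ℝ) ^ (-(r:ℤ) - 1) := by
        refine Real.iSup_le (fun y => ?_) (by positivity)
        obtain ⟨x, hxX, hle⟩ := hclose y y.2
        exact ciInf_le_of_le (bddBelow_dist _ _) ⟨x, hxX⟩ hle
      have hb2 : (⨆ z : X, ⨅ y : XofF A ((F : Finset (Finset (ZD d) × (ZD d → ℤ))) : Set (Finset (ZD d) × (ZD d → ℤ))),
          deltaDist (y : Config d) (z : Config d)) ≤ 0 := by
        refine Real.iSup_le (fun z => ?_) le_rfl
        exact ciInf_le_of_le (bddBelow_dist' _ _) ⟨(z : Config d), hXsub z.2⟩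
          (le_of_eq (deltaDist_self _))
      have hlt : (2:ℝ) ^ (-(r:ℤ) - 1) < ε :=
        lt_trans (zpow_lt_zpow_right₀ (by norm_num : (1:ℝ) < 2) (by omega)) hr
      exact max_lt (lt_of_le_of_lt hb1 hlt) (lt_of_le_of_lt hb2 hε)
    exact ⟨A, F, Set.Subset.antisymm hXsub (hsub _ hYshift hH)⟩
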